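/- arXiv:2407.15104 — 2 statements merged into one kernel-verified Lean document; each statement's English description precedes it below -/
import Mathlib

section
/- For m ≥ 3 and 1 ≤ ℓ ≤ m, the weight distribution of the lifted first-order Reed-Muller code RM₂(1,m)(2|2^ℓ) is: A₀ = 1; A_{2^m − 2^{m−h}} = 2^h ∏_{j=1}^{h} ((2^ℓ−2^{j−1})(2^m−2^{j−1}))/(2^{j−1}(2^j−1)) for each 1 ≤ h ≤ ℓ; A_{2^m} = 2^{ℓ(m+1)} − 1 − ∑_{h=1}^{ℓ} A_{2^m−2^{m−h}}; and A_i = 0 for all other i. -/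
open Finset

/-- Hamming weight of a vector. -/
noncomputable def wt {ι R : Type*} [Fintype ι] [Zero R] (c : ι → R) : ℕ :=
  Set.ncard {j | c j ≠ 0}

/-- The lifted code `C(q|q^ℓ)`: the `E`-span of (the image in `E^n` of) a code `C ⊆ F^n`. -/
noncomputable def liftCode (F : Type*) {ι : Type*} (E : Type*) [Field F] [Field E] [Algebra F E]
    (C : Submodule F (ι → F)) : Submodule E (ι → E) :=
  Submodule.span E ((fun c : ι → F => fun j => algebraMap F E (c j)) '' (C : Set (ι → F)))

/-- `A_i(C)`: the number of codewords of Hamming weight `i`. -/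
noncomputable def numWt {ι R : Type*} [Fintype ι] [Semiring R] (C : Submodule R (ι → R)) (i : ℕ) : ℕ :=
  Set.ncard {c : ι → R | c ∈ C ∧ wt c = i}

/-- The set of supports of weight-`i` codewords of `C` (without repetition). -/
def codeSupports {ι R : Type*} [Fintype ι] [Semiring R] (C : Submodule R (ι → R)) (i : ℕ) :
    Set (Set ι) :=
  {s | ∃ c, c ∈ C ∧ wt c = i ∧ s = {j | c j ≠ 0}}

/-- `C` has minimum Hamming distance `d`. -/
def IsMinDist {ι R : Type*} [Fintype ι] [Semiring R] (C : Submodule R (ι → R)) (d : ℕ) : Prop :=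
  (∃ c, c ∈ C ∧ c ≠ 0 ∧ wt c = d) ∧ ∀ c, c ∈ C → c ≠ 0 → d ≤ wt c

/-- The dual code under the standard bilinear form. -/
def dualCode {ι R : Type*} [Fintype ι] [CommRing R] (C : Submodule R (ι → R)) :
    Submodule R (ι → R) where
  carrier := {x | ∀ c ∈ C, ∑ j, x j * c j = 0}
  add_mem' := by
    intro a b ha hb c hc
    simp only [Set.mem_setOf_eq] at *
    simp [Pi.add_apply, add_mul, Finset.sum_add_distrib, ha c hc, hb c hc]
  zero_mem' := by intro c hc; simp
  smul_mem' := by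
    intro a x hx c hc
    simp only [Set.mem_setOf_eq] at *
    simp [Pi.smul_apply, smul_eq_mul, mul_assoc, ← Finset.mul_sum, hx c hc]

/-- Evaluation of multivariate polynomials over `GF(2)` as a linear map. -/
noncomputable def evalLM (m : ℕ) :
    MvPolynomial (Fin m) (ZMod 2) →ₗ[ZMod 2] ((Fin m → ZMod 2) → ZMod 2) where
  toFun := fun p x => MvPolynomial.eval x p
  map_add' := by intro p q; funext x; simp
  map_smul' := by intro a p; funext x; simp

/-- The binary Reed-Muller code `RM₂(r,m)`: evaluations of polynomials of total degree `≤ r`. -/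
noncomputable def RM (r m : ℕ) : Submodule (ZMod 2) ((Fin m → ZMod 2) → ZMod 2) :=
  Submodule.map (evalLM m) (MvPolynomial.restrictTotalDegree (Fin m) (ZMod 2) r)

section Aux
open Module Submodule
set_option linter.unusedSectionVars false
open scoped Classical
variable {E : Type*} [Field E] [Algebra (ZMod 2) E] [Fintype E]

private instance instFD : FiniteDimensional (ZMod 2) E :=
  (Module.finite_iff_finite (R := ZMod 2)).mpr inferInstance

private noncomputable def Lv {m : ℕ} (v : Fin m → E) : (Fin m → ZMod 2) →ₗ[ZMod 2] E where
  toFun x := ∑ i, x i • v i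
  map_add' x y := by simp [add_smul, Finset.sum_add_distrib]
  map_smul' a x := by simp [smul_assoc, Finset.smul_sum, mul_smul]

private lemma Lv_single {m : ℕ} (v : Fin m → E) (i : Fin m) :
    Lv v (Pi.single i 1) = v i := by
  simp only [Lv, LinearMap.coe_mk, AddHom.coe_mk]
  rw [Finset.sum_eq_single i]
  · simp
  · intro j _ hj; simp [Pi.single_apply, hj]
  · simp

private lemma range_Lv {m : ℕ} (v : Fin m → E) :
    LinearMap.range (Lv v) = Submodule.span (ZMod 2) (Set.range v) := by
  apply le_antisymm
  · rintro _ ⟨x, rfl⟩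
    simp only [Lv, LinearMap.coe_mk, AddHom.coe_mk]
    exact Submodule.sum_mem _ fun i _ =>
      Submodule.smul_mem _ _ (Submodule.subset_span ⟨i, rfl⟩)
  · rw [Submodule.span_le]
    rintro _ ⟨i, rfl⟩
    exact ⟨Pi.single i 1, Lv_single v i⟩


/-- the lifting map -/
private noncomputable def Phi (E : Type*) [Field E] [Algebra (ZMod 2) E] (m : ℕ) :
    ((Fin m → E) × E) →ₗ[E] ((Fin m → ZMod 2) → E) where
  toFun p := fun x => (∑ i, x i • p.1 i) + p.2
  map_add' p q := by
    funext x
    simp only [Prod.fst_add, Pi.add_apply, smul_add, Prod.snd_add, Finset.sum_add_distrib]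
    abel
  map_smul' a p := by
    funext x
    simp only [Prod.smul_fst, Prod.smul_snd, Pi.smul_apply, RingHom.id_apply]
    rw [smul_add, Finset.smul_sum]
    congr 1
    exact Finset.sum_congr rfl fun i _ => (smul_comm _ _ _)

private lemma Phi_apply {m : ℕ} (v : Fin m → E) (c : E) (x : Fin m → ZMod 2) :
    Phi E m (v, c) x = Lv v x + c := rfl

private lemma Phi_injective {m : ℕ} : Function.Injective (Phi E m) := by
  rw [← LinearMap.ker_eq_bot, LinearMap.ker_eq_bot']
  rintro ⟨v, c⟩ h
  have h0 := congrFun h 0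
  have hc : c = 0 := by simpa [Phi_apply, Lv] using h0
  subst hc
  have hv : v = 0 := by
    funext i
    have := congrFun h (Pi.single i 1)
    rw [Phi_apply] at this
    simpa [Lv_single] using this
  simp [hv]

private noncomputable def rk {m : ℕ} (v : Fin m → E) : ℕ :=
  finrank (ZMod 2) (Submodule.span (ZMod 2) (Set.range v))

private lemma rk_eq_range {m : ℕ} (v : Fin m → E) :
    rk v = finrank (ZMod 2) (LinearMap.range (Lv v)) := by
  rw [rk, range_Lv]

private lemma card_submodule {M : Type*} [AddCommGroup M] [Module (ZMod 2) M] [Finite M]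
    (S : Submodule (ZMod 2) M) : Nat.card S = 2 ^ finrank (ZMod 2) S := by
  have : Fintype S := Fintype.ofFinite S
  rw [Nat.card_eq_fintype_card, card_eq_pow_finrank (K := ZMod 2) (V := S), ZMod.card 2]

private lemma rk_le_l {m : ℕ} (v : Fin m → E) : rk v ≤ finrank (ZMod 2) E :=
  Submodule.finrank_le _

private lemma rk_le_m {m : ℕ} (v : Fin m → E) : rk v ≤ m := by
  rw [rk_eq_range]
  have h := LinearMap.finrank_range_le (Lv v)
  simpa [Module.finrank_pi] using h

private lemma card_fiber_Lv {m : ℕ} (v : Fin m → E) (c : E) :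
    Nat.card {x : Fin m → ZMod 2 // Lv v x = c}
      = if c ∈ LinearMap.range (Lv v) then 2 ^ (m - rk v) else 0 := by
  split_ifs with hc
  · obtain ⟨x₀, hx₀⟩ := hc
    have e : {x : Fin m → ZMod 2 // Lv v x = c} ≃ LinearMap.ker (Lv v) :=
      { toFun := fun x => ⟨x.1 - x₀, by
          simp [LinearMap.mem_ker, map_sub, x.2, hx₀]⟩
        invFun := fun y => ⟨y.1 + x₀, by
          have := y.2
          rw [LinearMap.mem_ker] at this
          simp [map_add, this, hx₀]⟩
        left_inv := fun x => by ext; simp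
        right_inv := fun y => by ext; simp }
    rw [Nat.card_congr e, card_submodule]
    congr 1
    have h1 := LinearMap.finrank_range_add_finrank_ker (Lv v)
    rw [Module.finrank_pi] at h1
    simp only [Fintype.card_fin] at h1
    rw [rk_eq_range]
    omega
  · have : IsEmpty {x : Fin m → ZMod 2 // Lv v x = c} := by
      constructor; rintro ⟨x, hx⟩; exact hc ⟨x, hx⟩
    simp [Nat.card_of_isEmpty]

private lemma wt_eq_card {ι R : Type*} [Fintype ι] [Zero R] (c : ι → R) :
    wt c = Nat.card {j : ι // c j ≠ 0} := by
  rw [wt, Set.ncard_eq_toFinset_card', Set.toFinset_setOf, ← Nat.card_eq_finsetCard]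
  exact Nat.card_congr (Equiv.subtypeEquivRight (by simp)).symm

private lemma neg_eq_self_E (c : E) : -c = c := by
  have h2 : (1 : E) + 1 = 0 := by
    rw [show (1:E) = algebraMap (ZMod 2) E 1 from (map_one _).symm, ← map_add,
      show (1 : ZMod 2) + 1 = 0 from by decide, map_zero]
  have hc : c + c = 0 := by
    have := congrArg (· * c) h2
    simpa [add_mul] using this
  exact neg_eq_of_add_eq_zero_left hc

private lemma wt_Phi {m : ℕ} (v : Fin m → E) (c : E) :
    wt (Phi E m (v, c))
      = 2 ^ m - (if c ∈ LinearMap.range (Lv v) then 2 ^ (m - rk v) else 0) := by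
  classical
  rw [wt_eq_card]
  have key : ∀ x : Fin m → ZMod 2, Phi E m (v, c) x = 0 ↔ Lv v x = c := by
    intro x
    rw [Phi_apply]
    rw [add_eq_zero_iff_eq_neg, neg_eq_self_E]
  have hcompl : Nat.card {x : Fin m → ZMod 2 // Phi E m (v, c) x ≠ 0}
      = 2 ^ m - Nat.card {x : Fin m → ZMod 2 // Lv v x = c} := by
    have : ∀ x : Fin m → ZMod 2, Phi E m (v, c) x ≠ 0 ↔ ¬ (Lv v x = c) := by
      intro x; exact not_congr (key x)
    rw [Nat.card_congr (Equiv.subtypeEquivRight this)]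
    rw [Nat.card_eq_fintype_card, Nat.card_eq_fintype_card, Fintype.card_subtype_compl]
    congr 1
    simp [Fintype.card_pi]
  rw [hcompl, card_fiber_Lv]

private lemma card_E : Fintype.card E = 2 ^ finrank (ZMod 2) E := by
  rw [card_eq_pow_finrank (K := ZMod 2) (V := E), ZMod.card]

private lemma rk_cons {m : ℕ} (a : E) (v : Fin m → E) :
    rk (Fin.cons a v) = if a ∈ Submodule.span (ZMod 2) (Set.range v) then rk v else rk v + 1 := by
  rw [rk, Fin.range_cons, Submodule.span_insert]
  split_ifs with ha
  · rw [sup_eq_right.mpr (by rw [Submodule.span_le, Set.singleton_subset_iff]; exact ha)]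
    rfl
  · have hinf : (Submodule.span (ZMod 2) {a}) ⊓ Submodule.span (ZMod 2) (Set.range v) = ⊥ := by
      rw [eq_bot_iff]
      rintro x hx
      rw [Submodule.mem_inf] at hx
      obtain ⟨hx1, hx2⟩ := hx
      rw [Submodule.mem_span_singleton] at hx1
      obtain ⟨t, rfl⟩ := hx1
      have htall : ∀ s : ZMod 2, s = 0 ∨ s = 1 := by decide
      have ht := htall t
      rcases ht with rfl | rfl
      · simp
      · rw [one_smul] at hx2; exact absurd hx2 ha
    have ha0 : a ≠ 0 := fun h => ha (h ▸ Submodule.zero_mem _)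
    have hkey := Submodule.finrank_sup_add_finrank_inf_eq
      (Submodule.span (ZMod 2) {a}) (Submodule.span (ZMod 2) (Set.range v))
    rw [hinf, finrank_bot, finrank_span_singleton ha0] at hkey
    rw [rk]
    omega

private noncomputable def Ncnt (E : Type*) [Field E] [Algebra (ZMod 2) E] [Fintype E]
    (m h : ℕ) : ℕ :=
  Nat.card {v : Fin m → E // rk v = h}

private lemma Ncnt_eq_filter (m h : ℕ) :
    Ncnt E m h = (Finset.univ.filter (fun v : Fin m → E => rk v = h)).card := by
  rw [Ncnt, Nat.card_eq_fintype_card, Fintype.card_subtype]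

private lemma rk_fin_zero (v : Fin 0 → E) : rk v = 0 := by
  rw [rk, Set.range_eq_empty, Submodule.span_empty, finrank_bot]

private lemma Ncnt_zero_zero : Ncnt E 0 0 = 1 := by
  have : Unique {v : Fin 0 → E // rk v = 0} :=
    ⟨⟨⟨default, rk_fin_zero _⟩⟩, fun x => Subtype.ext (Subsingleton.elim _ _)⟩
  rw [Ncnt, Nat.card_unique]

private lemma Ncnt_zero_succ (h : ℕ) : Ncnt E 0 (h + 1) = 0 := by
  have : IsEmpty {v : Fin 0 → E // rk v = h + 1} := by
    constructor; rintro ⟨v, hv⟩; rw [rk_fin_zero] at hv; omega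
  rw [Ncnt, Nat.card_of_isEmpty]

private lemma Ncnt_of_gt {m h : ℕ} (hh : finrank (ZMod 2) E < h) : Ncnt E m h = 0 := by
  have : IsEmpty {v : Fin m → E // rk v = h} := by
    constructor; rintro ⟨v, hv⟩; have := rk_le_l v; omega
  rw [Ncnt, Nat.card_of_isEmpty]

private lemma card_prod_fiber {α β : Type*} [Fintype α] [Fintype β] (R : α → β → Prop) :
    Nat.card {p : α × β // R p.1 p.2} = ∑ a : α, Nat.card {b : β // R a b} := by
  rw [Nat.card_eq_fintype_card, Fintype.card_subtype]
  have hb : ∀ a, Nat.card {b : β // R a b} = (Finset.univ.filter (R a)).card := fun a => by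
    rw [Nat.card_eq_fintype_card, Fintype.card_subtype]
  simp_rw [hb, Finset.card_filter, Fintype.sum_prod_type]

private lemma card_a_fiber {m : ℕ} (v : Fin m → E) (h : ℕ) :
    Nat.card {a : E // rk (Fin.cons a v) = h}
      = if rk v = h then 2 ^ h
        else if rk v + 1 = h then Fintype.card E - 2 ^ rk v else 0 := by
  split_ifs with h1 h2
  · have hiff : ∀ a : E, rk (Fin.cons a v) = h ↔
        a ∈ Submodule.span (ZMod 2) (Set.range v) := by
      intro a; rw [rk_cons]; split_ifs with ha
      · simp [ha, h1]
      · simp only [ha, iff_false]; omega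
    rw [Nat.card_congr (Equiv.subtypeEquivRight hiff)]
    have := card_submodule (Submodule.span (ZMod 2) (Set.range v))
    rw [this, ← h1, rk]
  · have hiff : ∀ a : E, rk (Fin.cons a v) = h ↔
        ¬ a ∈ Submodule.span (ZMod 2) (Set.range v) := by
      intro a; rw [rk_cons]; split_ifs with ha
      · simp only [ha, not_true, iff_false]; omega
      · simp [ha, h2]
    rw [Nat.card_congr (Equiv.subtypeEquivRight hiff), Nat.card_eq_fintype_card,
      Fintype.card_subtype_compl]
    congr 1
    have := card_submodule (Submodule.span (ZMod 2) (Set.range v))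
    rw [Nat.card_eq_fintype_card] at this
    rw [this]
    rfl
  · have : IsEmpty {a : E // rk (Fin.cons a v) = h} := by
      constructor; rintro ⟨a, ha⟩
      rw [rk_cons] at ha; split_ifs at ha <;> omega
    rw [Nat.card_of_isEmpty]

private lemma Ncnt_cons_equiv (m h : ℕ) :
    Ncnt E (m + 1) h
      = Nat.card {p : (Fin m → E) × E // rk (Fin.cons p.2 p.1) = h} := by
  rw [Ncnt]
  refine Nat.card_congr (Equiv.subtypeEquiv
    (((Equiv.prodComm _ _).trans (Fin.consEquiv (fun _ => E)))) ?_).symm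
  intro p
  rfl

private lemma sum_ite_card {α : Type*} [Fintype α] (p : α → Prop) [DecidablePred p] (c : ℕ) :
    ∑ a : α, (if p a then c else 0) = (Finset.univ.filter p).card * c := by
  rw [← Finset.sum_filter, Finset.sum_const, smul_eq_mul]

private lemma Ncnt_succ_succ (m h : ℕ) :
    Ncnt E (m + 1) (h + 1)
      = 2 ^ (h + 1) * Ncnt E m (h + 1) + (Fintype.card E - 2 ^ h) * Ncnt E m h := by
  rw [Ncnt_cons_equiv, card_prod_fiber (fun v a => rk (Fin.cons a v) = h + 1)]
  have hpt : ∀ v : Fin m → E,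
      Nat.card {a : E // rk (Fin.cons a v) = h + 1}
        = (if rk v = h + 1 then 2 ^ (h + 1) else 0)
          + (if rk v = h then Fintype.card E - 2 ^ h else 0) := by
    intro v
    rw [card_a_fiber]
    by_cases h1 : rk v = h + 1
    · rw [if_pos h1, if_pos h1, if_neg (by omega), add_zero]
    · rw [if_neg h1, if_neg h1, zero_add]
      by_cases h2 : rk v = h
      · rw [if_pos (by omega), if_pos h2, h2]
      · rw [if_neg (by omega), if_neg h2]
  simp_rw [hpt]
  rw [Finset.sum_add_distrib, sum_ite_card, sum_ite_card, ← Ncnt_eq_filter, ← Ncnt_eq_filter,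
    mul_comm (Ncnt E m (h+1)) (2 ^ (h+1)), mul_comm (Ncnt E m h) (Fintype.card E - 2 ^ h)]

private lemma Ncnt_succ_zero (m : ℕ) : Ncnt E (m + 1) 0 = Ncnt E m 0 := by
  rw [Ncnt_cons_equiv, card_prod_fiber (fun v a => rk (Fin.cons a v) = 0)]
  have hpt : ∀ v : Fin m → E,
      Nat.card {a : E // rk (Fin.cons a v) = 0}
        = (if rk v = 0 then 1 else 0) := by
    intro v
    rw [card_a_fiber]
    by_cases h0 : rk v = 0
    · rw [if_pos h0, if_pos h0]; rfl
    · rw [if_neg h0, if_neg h0, if_neg (by omega)]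
  simp_rw [hpt]
  rw [sum_ite_card, ← Ncnt_eq_filter, mul_one]

private lemma Ncnt_m_zero (m : ℕ) : Ncnt E m 0 = 1 := by
  induction m with
  | zero => exact Ncnt_zero_zero
  | succ k ihk => rw [Ncnt_succ_zero]; exact ihk

private lemma Ncnt_formula (m h : ℕ) :
    (Ncnt E m h : ℚ) * ∏ j ∈ Finset.range h, ((2:ℚ) ^ j * ((2:ℚ) ^ (j + 1) - 1))
      = (∏ j ∈ Finset.range h, ((2:ℚ) ^ (finrank (ZMod 2) E) - 2 ^ j))
        * ∏ j ∈ Finset.range h, ((2:ℚ) ^ m - 2 ^ j) := by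
  induction m generalizing h with
  | zero =>
    cases h with
    | zero => simp [Ncnt_zero_zero]
    | succ h =>
      rw [Ncnt_zero_succ]
      rw [Finset.prod_range_succ' (fun j => (2:ℚ) ^ (0:ℕ) - 2 ^ j) h]
      simp
  | succ m ih =>
    cases h with
    | zero => simp [Ncnt_m_zero]
    | succ h =>
      by_cases hl : h < finrank (ZMod 2) E
      · rw [Ncnt_succ_succ]
        have h2l : (2:ℕ) ^ h ≤ 2 ^ finrank (ZMod 2) E :=
          Nat.pow_le_pow_right (by norm_num) (by omega)
        rw [card_E]
        push_cast [Nat.cast_sub h2l]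
        have ih1 := ih (h + 1)
        have ih0 := ih h
        rw [Finset.prod_range_succ (fun j => (2:ℚ) ^ j * ((2:ℚ) ^ (j+1) - 1)) h] at ih1 ⊢
        rw [Finset.prod_range_succ (fun j => (2:ℚ) ^ (finrank (ZMod 2) E) - 2 ^ j) h] at ih1 ⊢
        rw [Finset.prod_range_succ (fun j => (2:ℚ) ^ m - 2 ^ j) h] at ih1
        have hPm1 : (∏ j ∈ Finset.range (h+1), ((2:ℚ) ^ (m+1) - 2 ^ j))
            = ((2:ℚ) ^ (m+1) - 1) * (2 ^ h * ∏ j ∈ Finset.range h, ((2:ℚ) ^ m - 2 ^ j)) := by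
          rw [Finset.prod_range_succ' (fun j => (2:ℚ) ^ (m+1) - 2 ^ j) h]
          have : ∀ j, (2:ℚ) ^ (m+1) - 2 ^ (j+1) = 2 * ((2:ℚ) ^ m - 2 ^ j) := by
            intro j; ring
          simp_rw [this]
          rw [Finset.prod_mul_distrib, Finset.prod_const, Finset.card_range]
          ring
        rw [hPm1]
        linear_combination ((2:ℚ) ^ (h+1)) * ih1
          + (((2:ℚ) ^ (finrank (ZMod 2) E) - 2 ^ h) * 2 ^ h * ((2:ℚ) ^ (h+1) - 1)) * ih0
      · rw [Ncnt_of_gt (by omega)]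
        have hz : (∏ j ∈ Finset.range (h+1), ((2:ℚ) ^ (finrank (ZMod 2) E) - 2 ^ j)) = 0 :=
          Finset.prod_eq_zero (Finset.mem_range.mpr (by omega) :
            finrank (ZMod 2) E ∈ Finset.range (h+1)) (by ring)
        rw [hz]
        simp

private lemma eval_affine {m : ℕ} (p : MvPolynomial (Fin m) (ZMod 2)) (hp : p.totalDegree ≤ 1)
    (x : Fin m → ZMod 2) :
    MvPolynomial.eval x p
      = (∑ i, x i * MvPolynomial.coeff (Finsupp.single i 1) p) + MvPolynomial.coeff 0 p := by
  classical
  rw [MvPolynomial.eval_eq']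
  set T : Finset ((Fin m) →₀ ℕ) :=
    insert 0 (Finset.univ.image fun i : Fin m => Finsupp.single i 1) with hT
  have hsub : p.support ⊆ T := by
    intro s hs
    have hdeg : (s.sum fun _ e => e) ≤ 1 := le_trans (MvPolynomial.le_totalDegree hs) hp
    have hle : ∀ j, s j ≤ s.sum fun _ e => e := by
      intro j
      by_cases hj : j ∈ s.support
      · exact Finset.single_le_sum (fun _ _ => Nat.zero_le _) hj
      · simp [Finsupp.notMem_support_iff.mp hj]
    by_cases h0 : s = 0
    · simp [hT, h0]
    · obtain ⟨i, hi⟩ := Finsupp.ne_iff.mp h0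
      rw [Finsupp.coe_zero, Pi.zero_apply] at hi
      have hsingle : s = Finsupp.single i 1 := by
        ext j
        rcases eq_or_ne j i with rfl | hj
        · rw [Finsupp.single_eq_same]
          have := hle j
          omega
        · rw [Finsupp.single_eq_of_ne' (Ne.symm hj)]
          by_contra hsj
          have h2 : 2 ≤ s.sum fun _ e => e := by
            have hij : ({i, j} : Finset (Fin m)) ⊆ s.support := by
              intro k hk
              rw [Finset.mem_insert, Finset.mem_singleton] at hk
              rcases hk with rfl | rfl <;> rw [Finsupp.mem_support_iff] <;> omega
            have hsum2 : ∑ k ∈ ({i, j} : Finset (Fin m)), s k ≤ s.sum fun _ e => e := by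
              rw [Finsupp.sum]
              exact Finset.sum_le_sum_of_subset hij
            rw [Finset.sum_pair hj.symm] at hsum2
            omega
          omega
      rw [hT, Finset.mem_insert]
      right
      exact Finset.mem_image.mpr ⟨i, Finset.mem_univ i, hsingle.symm⟩
  rw [Finset.sum_subset hsub (fun s _ hs => by
    rw [MvPolynomial.notMem_support_iff.mp hs, zero_mul])]
  have h0T : (0 : (Fin m) →₀ ℕ) ∉ Finset.univ.image fun i : Fin m => Finsupp.single i 1 := by
    rw [Finset.mem_image]
    rintro ⟨i, -, hi⟩
    exact one_ne_zero (Finsupp.single_eq_zero.mp hi)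
  rw [Finset.sum_insert h0T, Finset.sum_image
    (fun a _ b _ hab => Finsupp.single_left_injective one_ne_zero hab)]
  have hterm : ∀ i : Fin m,
      MvPolynomial.coeff (Finsupp.single i 1) p * ∏ j, x j ^ (Finsupp.single i 1) j
        = x i * MvPolynomial.coeff (Finsupp.single i 1) p := by
    intro i
    have hprod : (∏ j, x j ^ (Finsupp.single i 1) j) = x i := by
      rw [Finset.prod_eq_single i
        (fun j _ hj => by rw [Finsupp.single_eq_of_ne' (Ne.symm hj), pow_zero])
        (fun h => absurd (Finset.mem_univ i) h)]
      rw [Finsupp.single_eq_same, pow_one]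
    rw [hprod, mul_comm]
  simp_rw [hterm]
  have h0term : MvPolynomial.coeff 0 p * ∏ j, x j ^ (0 : (Fin m) →₀ ℕ) j
      = MvPolynomial.coeff 0 p := by simp
  rw [h0term, add_comm]

private lemma range_Phi (m : ℕ) :
    liftCode (ZMod 2) E (RM 1 m) = LinearMap.range (Phi E m) := by
  apply le_antisymm
  · rw [liftCode, Submodule.span_le]
    rintro _ ⟨c, hc, rfl⟩
    obtain ⟨p, hp, rfl⟩ := hc
    rw [SetLike.mem_coe, MvPolynomial.mem_restrictTotalDegree] at hp
    refine ⟨(fun i => algebraMap (ZMod 2) E (MvPolynomial.coeff (Finsupp.single i 1) p),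
      algebraMap (ZMod 2) E (MvPolynomial.coeff 0 p)), ?_⟩
    funext x
    show (∑ i, x i • algebraMap (ZMod 2) E (MvPolynomial.coeff (Finsupp.single i 1) p))
        + algebraMap (ZMod 2) E (MvPolynomial.coeff 0 p)
      = algebraMap (ZMod 2) E ((evalLM m p) x)
    have hx : (evalLM m p) x = MvPolynomial.eval x p := rfl
    rw [hx, eval_affine p hp x, map_add, map_sum]
    congr 1
    refine Finset.sum_congr rfl fun i _ => ?_
    rw [map_mul, Algebra.smul_def]
  · rintro _ ⟨⟨v, c⟩, rfl⟩
    have hmem : ∀ (p : MvPolynomial (Fin m) (ZMod 2)), p.totalDegree ≤ 1 →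
        (fun x : Fin m → ZMod 2 => algebraMap (ZMod 2) E (MvPolynomial.eval x p))
          ∈ liftCode (ZMod 2) E (RM 1 m) := by
      intro p hp
      apply Submodule.subset_span
      exact ⟨evalLM m p, ⟨p, (MvPolynomial.mem_restrictTotalDegree (Fin m) 1 p).mpr hp, rfl⟩, rfl⟩
    have h1 : (fun _ : Fin m → ZMod 2 => (1:E)) ∈ liftCode (ZMod 2) E (RM 1 m) := by
      have := hmem 1 (by simp)
      simpa using this
    have hX : ∀ i : Fin m, (fun x : Fin m → ZMod 2 => algebraMap (ZMod 2) E (x i))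
        ∈ liftCode (ZMod 2) E (RM 1 m) := by
      intro i
      have := hmem (MvPolynomial.X i) (by simp [MvPolynomial.totalDegree_X])
      simpa using this
    have heq : Phi E m (v, c)
        = (∑ i, v i • fun x : Fin m → ZMod 2 => algebraMap (ZMod 2) E (x i))
          + c • (fun _ : Fin m → ZMod 2 => (1:E)) := by
      funext x
      simp only [Phi_apply, Lv, LinearMap.coe_mk, AddHom.coe_mk, Pi.add_apply,
        Finset.sum_apply, Pi.smul_apply, smul_eq_mul, mul_one]
      congr 1
      refine Finset.sum_congr rfl fun i _ => ?_
      rw [Algebra.smul_def, mul_comm]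
    rw [heq]
    exact Submodule.add_mem _
      (Submodule.sum_mem _ fun i _ => Submodule.smul_mem _ _ (hX i))
      (Submodule.smul_mem _ _ h1)

private lemma numWt_eq (m i : ℕ) :
    numWt (liftCode (ZMod 2) E (RM 1 m)) i
      = Nat.card {p : (Fin m → E) × E // wt (Phi E m p) = i} := by
  rw [numWt]
  have hset : {c : (Fin m → ZMod 2) → E | c ∈ liftCode (ZMod 2) E (RM 1 m) ∧ wt c = i}
      = (Phi E m) '' {p | wt (Phi E m p) = i} := by
    ext c
    simp only [Set.mem_setOf_eq, Set.mem_image, range_Phi]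
    constructor
    · rintro ⟨⟨p, rfl⟩, hw⟩; exact ⟨p, hw, rfl⟩
    · rintro ⟨p, hw, rfl⟩; exact ⟨⟨p, rfl⟩, hw⟩
  rw [hset, Set.ncard_image_of_injective _ Phi_injective, ← Nat.card_coe_set_eq]
  rfl

set_option maxHeartbeats 1000000 in
private lemma count_wh {m : ℕ} (h : ℕ) (h1 : 1 ≤ h) (hh : h ≤ finrank (ZMod 2) E)
    (hlm : finrank (ZMod 2) E ≤ m) :
    Nat.card {p : (Fin m → E) × E // wt (Phi E m p) = 2 ^ m - 2 ^ (m - h)}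
      = 2 ^ h * Ncnt E m h := by
  have hhm : h ≤ m := le_trans hh hlm
  have hcond : ∀ (v : Fin m → E) (c : E),
      wt (Phi E m (v, c)) = 2 ^ m - 2 ^ (m - h)
        ↔ (rk v = h ∧ c ∈ LinearMap.range (Lv v)) := by
    intro v c
    rw [wt_Phi]
    by_cases hc : c ∈ LinearMap.range (Lv v)
    · rw [if_pos hc]
      constructor
      · intro he
        have hrm := rk_le_m v
        have e1 : (2:ℕ) ^ (m - rk v) ≤ 2 ^ m := Nat.pow_le_pow_right (by norm_num) (by omega)
        have e2 : (2:ℕ) ^ (m - h) ≤ 2 ^ m := Nat.pow_le_pow_right (by norm_num) (by omega)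
        have e3 : (2:ℕ) ^ (m - rk v) = 2 ^ (m - h) := by omega
        have e4 : m - rk v = m - h := Nat.pow_right_injective (le_refl 2) e3
        exact ⟨by omega, hc⟩
      · rintro ⟨rfl, -⟩; rfl
    · rw [if_neg hc, Nat.sub_zero]
      constructor
      · intro he
        have e2 : (2:ℕ) ^ (m - h) ≤ 2 ^ m := Nat.pow_le_pow_right (by norm_num) (by omega)
        have e3 : 1 ≤ (2:ℕ) ^ (m - h) := Nat.one_le_two_pow
        omega
      · rintro ⟨-, hcm⟩; exact absurd hcm hc
  have e1 : Nat.card {p : (Fin m → E) × E // wt (Phi E m p) = 2 ^ m - 2 ^ (m - h)}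
      = Nat.card {p : (Fin m → E) × E // rk p.1 = h ∧ p.2 ∈ LinearMap.range (Lv p.1)} :=
    Nat.card_congr (Equiv.subtypeEquivRight (fun p => hcond p.1 p.2))
  rw [e1, card_prod_fiber (fun v c => rk v = h ∧ c ∈ LinearMap.range (Lv v))]
  have hpt : ∀ v : Fin m → E,
      Nat.card {c : E // rk v = h ∧ c ∈ LinearMap.range (Lv v)}
        = if rk v = h then 2 ^ h else 0 := by
    intro v
    split_ifs with hv
    · rw [Nat.card_congr (Equiv.subtypeEquivRight (fun c => and_iff_right hv))]
      have := card_submodule (LinearMap.range (Lv v))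
      rw [← rk_eq_range, hv] at this
      exact this
    · have : IsEmpty {c : E // rk v = h ∧ c ∈ LinearMap.range (Lv v)} := by
        constructor; rintro ⟨c, hc1, -⟩; exact hv hc1
      rw [Nat.card_of_isEmpty]
  simp_rw [hpt]
  rw [sum_ite_card, ← Ncnt_eq_filter, mul_comm]

private lemma wt_eq_zero_iff {ι R : Type*} [Fintype ι] [Zero R] (f : ι → R) :
    wt f = 0 ↔ f = 0 := by
  rw [wt, Set.ncard_eq_zero (Set.toFinite _)]
  constructor
  · intro hs
    funext j
    by_contra hj
    exact absurd hs (Set.nonempty_iff_ne_empty.mp ⟨j, hj⟩)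
  · intro hf
    ext j
    simp [hf]

private lemma count_w0 (m : ℕ) :
    Nat.card {p : (Fin m → E) × E // wt (Phi E m p) = 0} = 1 := by
  have hcond : ∀ p : (Fin m → E) × E, wt (Phi E m p) = 0 ↔ p = 0 := by
    intro p
    rw [wt_eq_zero_iff]
    constructor
    · intro hp
      apply Phi_injective
      rw [hp, map_zero]
    · rintro rfl; rw [map_zero]
  rw [Nat.card_congr (Equiv.subtypeEquivRight hcond)]
  have : Unique {p : (Fin m → E) × E // p = 0} :=
    ⟨⟨⟨0, rfl⟩⟩, fun x => Subtype.ext x.2⟩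
  rw [Nat.card_unique]

private lemma wt_mem_T {m : ℕ} (hm1 : 1 ≤ m) (hlm : finrank (ZMod 2) E ≤ m)
    (p : (Fin m → E) × E) :
    wt (Phi E m p) ∈ insert 0 (insert (2 ^ m)
      ((Finset.Icc 1 (finrank (ZMod 2) E)).image (fun h => 2 ^ m - 2 ^ (m - h)))) := by
  obtain ⟨v, c⟩ := p
  rw [wt_Phi]
  by_cases hc : c ∈ LinearMap.range (Lv v)
  · rw [if_pos hc]
    by_cases h0 : rk v = 0
    · rw [h0]
      simp
    · refine Finset.mem_insert_of_mem (Finset.mem_insert_of_mem ?_)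
      exact Finset.mem_image.mpr ⟨rk v, Finset.mem_Icc.mpr ⟨by omega, rk_le_l v⟩, rfl⟩
  · rw [if_neg hc, Nat.sub_zero]
    exact Finset.mem_insert_of_mem (Finset.mem_insert_self _ _)

private lemma numWt_filter_eq (m i : ℕ) :
    Nat.card {p : (Fin m → E) × E // wt (Phi E m p) = i}
      = (Finset.univ.filter (fun p : (Fin m → E) × E => wt (Phi E m p) = i)).card := by
  rw [Nat.card_eq_fintype_card, Fintype.card_subtype]

private lemma total_partition {m : ℕ} (hm1 : 1 ≤ m) (hlm : finrank (ZMod 2) E ≤ m) :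
    2 ^ (finrank (ZMod 2) E * (m + 1))
      = numWt (liftCode (ZMod 2) E (RM 1 m)) 0
        + numWt (liftCode (ZMod 2) E (RM 1 m)) (2 ^ m)
        + ∑ h ∈ Finset.Icc 1 (finrank (ZMod 2) E),
            numWt (liftCode (ZMod 2) E (RM 1 m)) (2 ^ m - 2 ^ (m - h)) := by
  classical
  set l := finrank (ZMod 2) E with hldef
  set T : Finset ℕ := insert 0 (insert (2 ^ m)
    ((Finset.Icc 1 l).image (fun h => 2 ^ m - 2 ^ (m - h)))) with hTdef
  have hcard : (Finset.univ : Finset ((Fin m → E) × E)).card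
      = ∑ i ∈ T, (Finset.univ.filter
          (fun p : (Fin m → E) × E => wt (Phi E m p) = i)).card := by
    apply Finset.card_eq_sum_card_fiberwise
    intro p _
    exact wt_mem_T hm1 hlm p
  have htotal : (Finset.univ : Finset ((Fin m → E) × E)).card = 2 ^ (l * (m + 1)) := by
    rw [Finset.card_univ, Fintype.card_prod, Fintype.card_fun, card_E, Fintype.card_fin,
      ← pow_mul, ← pow_add, ← hldef]
    ring_nf
  have hwh_pos : ∀ h ∈ Finset.Icc 1 l, 0 < 2 ^ m - 2 ^ (m - h) := by
    intro h hh
    rw [Finset.mem_Icc] at hh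
    have : (2:ℕ) ^ (m - h) < 2 ^ m :=
      Nat.pow_lt_pow_right (by norm_num) (by omega)
    omega
  have hwh_lt : ∀ h ∈ Finset.Icc 1 l, 2 ^ m - 2 ^ (m - h) < 2 ^ m := by
    intro h hh
    have : 1 ≤ (2:ℕ) ^ (m - h) := Nat.one_le_two_pow
    have : 0 < (2:ℕ) ^ m := pow_pos (by norm_num) _
    omega
  have h0ni : (0:ℕ) ∉ insert (2 ^ m) ((Finset.Icc 1 l).image (fun h => 2 ^ m - 2 ^ (m - h))) := by
    rw [Finset.mem_insert, Finset.mem_image]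
    push_neg
    constructor
    · have : 0 < (2:ℕ) ^ m := pow_pos (by norm_num) _
      omega
    · intro h hh
      have := hwh_pos h hh
      omega
  have h2ni : (2 ^ m : ℕ) ∉ (Finset.Icc 1 l).image (fun h => 2 ^ m - 2 ^ (m - h)) := by
    rw [Finset.mem_image]
    rintro ⟨h, hh, he⟩
    have := hwh_lt h hh
    omega
  rw [hTdef] at hcard
  rw [Finset.sum_insert h0ni, Finset.sum_insert h2ni, Finset.sum_image ?hinj] at hcard
  case hinj =>
    intro a ha b hb hab
    rw [Finset.mem_coe, Finset.mem_Icc] at ha hb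
    have e2a : (2:ℕ) ^ (m - a) ≤ 2 ^ m := Nat.pow_le_pow_right (by norm_num) (by omega)
    have e2b : (2:ℕ) ^ (m - b) ≤ 2 ^ m := Nat.pow_le_pow_right (by norm_num) (by omega)
    have : (2:ℕ) ^ (m - a) = 2 ^ (m - b) := by simp only at hab; omega
    have := Nat.pow_right_injective (le_refl 2) this
    omega
  rw [htotal] at hcard
  rw [hcard]
  simp_rw [numWt_eq, numWt_filter_eq]
  omega

private lemma numWt_other (m i : ℕ) (hm1 : 1 ≤ m) (hlm : finrank (ZMod 2) E ≤ m)
    (h0 : i ≠ 0) (h2 : i ≠ 2 ^ m)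
    (hother : ∀ h, 1 ≤ h → h ≤ finrank (ZMod 2) E → i ≠ 2 ^ m - 2 ^ (m - h)) :
    numWt (liftCode (ZMod 2) E (RM 1 m)) i = 0 := by
  rw [numWt_eq]
  have : IsEmpty {p : (Fin m → E) × E // wt (Phi E m p) = i} := by
    constructor
    rintro ⟨p, hp⟩
    have hmem := wt_mem_T hm1 hlm p
    rw [hp] at hmem
    rw [Finset.mem_insert, Finset.mem_insert, Finset.mem_image] at hmem
    rcases hmem with h | h | ⟨h, hh, he⟩
    · exact h0 h
    · exact h2 h
    · rw [Finset.mem_Icc] at hh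
      exact hother h hh.1 hh.2 he.symm
  rw [Nat.card_of_isEmpty]

private lemma prod_Icc_one {M : Type*} [CommMonoid M] (f : ℕ → M) (h : ℕ) :
    ∏ j ∈ Finset.Icc 1 h, f j = ∏ j ∈ Finset.range h, f (j + 1) := by
  induction h with
  | zero => simp
  | succ n ih => rw [Finset.prod_Icc_succ_top (by omega), ih, Finset.prod_range_succ]

end Aux

set_option maxHeartbeats 1000000 in
/-- the weight distribution of the lifted first-order Reed-Muller code
`RM₂(1,m)(2|2^ℓ)`: `A₀ = 1`;
`A_{2^m-2^{m-h}} = 2^h ∏_{j=1}^h (2^ℓ-2^{j-1})(2^m-2^{j-1})/(2^{j-1}(2^j-1))` for `1 ≤ h ≤ ℓ`;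
`A_{2^m} = 2^{ℓ(m+1)} - 1 - ∑_{h=1}^ℓ A_{2^m-2^{m-h}}`; and `A_i = 0` otherwise. -/
theorem stmt17 {E : Type*} [Field E] [Algebra (ZMod 2) E] [Fintype E]
    {m ℓ : ℕ} (hm : 3 ≤ m) (hl1 : 1 ≤ ℓ) (hlm : ℓ ≤ m)
    (hE : Fintype.card E = 2 ^ ℓ) :
    numWt (liftCode (ZMod 2) E (RM 1 m)) 0 = 1 ∧
    (∀ h, 1 ≤ h → h ≤ ℓ →
      (numWt (liftCode (ZMod 2) E (RM 1 m)) (2 ^ m - 2 ^ (m - h)) : ℚ)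
        = 2 ^ h * ∏ j ∈ Finset.Icc 1 h,
            (((2 : ℚ) ^ ℓ - 2 ^ (j - 1)) * ((2 : ℚ) ^ m - 2 ^ (j - 1))) /
            ((2 : ℚ) ^ (j - 1) * ((2 : ℚ) ^ j - 1))) ∧
    numWt (liftCode (ZMod 2) E (RM 1 m)) (2 ^ m)
      = 2 ^ (ℓ * (m + 1)) - 1 -
          ∑ h ∈ Finset.Icc 1 ℓ, numWt (liftCode (ZMod 2) E (RM 1 m)) (2 ^ m - 2 ^ (m - h)) ∧
    ∀ i, i ≠ 0 → i ≠ 2 ^ m → (∀ h, 1 ≤ h → h ≤ ℓ → i ≠ 2 ^ m - 2 ^ (m - h)) →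
      numWt (liftCode (ZMod 2) E (RM 1 m)) i = 0 := by
  classical
  have hl : Module.finrank (ZMod 2) E = ℓ :=
    Nat.pow_right_injective (le_refl 2) ((card_E (E := E)).symm.trans hE)
  have hm1 : 1 ≤ m := by omega
  have hlm' : Module.finrank (ZMod 2) E ≤ m := by rw [hl]; exact hlm
  have h0cnt : numWt (liftCode (ZMod 2) E (RM 1 m)) 0 = 1 := by
    rw [numWt_eq, count_w0]
  refine ⟨h0cnt, ?_, ?_, ?_⟩
  · intro h hh1 hh2
    rw [numWt_eq, count_wh h hh1 (by rw [hl]; exact hh2) hlm']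
    push_cast
    rw [prod_Icc_one (fun j => (((2 : ℚ) ^ ℓ - 2 ^ (j - 1)) * ((2 : ℚ) ^ m - 2 ^ (j - 1))) /
      ((2 : ℚ) ^ (j - 1) * ((2 : ℚ) ^ j - 1))) h]
    simp only [Nat.add_sub_cancel]
    have hD : (∏ j ∈ Finset.range h, ((2:ℚ) ^ j * ((2:ℚ) ^ (j + 1) - 1))) ≠ 0 := by
      apply Finset.prod_ne_zero_iff.mpr
      intro j _
      refine mul_ne_zero (pow_ne_zero _ two_ne_zero) ?_
      have h1 : (2:ℚ) ^ 1 ≤ 2 ^ (j + 1) := by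
        apply pow_le_pow_right₀ (by norm_num) (by omega)
      intro hz
      rw [sub_eq_zero] at hz
      rw [hz] at h1
      norm_num at h1
    have hF := Ncnt_formula (E := E) m h
    rw [hl] at hF
    rw [Finset.prod_div_distrib, Finset.prod_mul_distrib, ← hF, mul_div_assoc, div_self hD,
      mul_one]
  · have ht := total_partition (E := E) hm1 hlm'
    rw [hl] at ht
    omega
  · intro i h0 h2 hother
    exact numWt_other m i hm1 hlm' h0 h2
      (fun h hh1 hh2 => hother h hh1 (by rw [← hl]; exact hh2))
end

section
/- For m ≥ 3, ℓ ≥ 1, 0 ≤ r < m, and each i ≥ 3 with A_i(RM₂(r,m)(2|2^ℓ)) > 0, the supports of the weight-i codewords of RM₂(r,m)(2|2^ℓ) form a 3-design on 2^m points. -/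
open Finset

open MvPolynomial in
private lemma td_aeval_le' {m : ℕ} {R : Type*} [CommRing R] (f : Fin m → MvPolynomial (Fin m) R)
    (hf : ∀ j, (f j).totalDegree ≤ 1) (p : MvPolynomial (Fin m) R) :
    (aeval f p).totalDegree ≤ p.totalDegree := by
  conv_lhs => rw [p.as_sum]
  rw [map_sum]
  refine le_trans (totalDegree_finset_sum _ _) (Finset.sup_le fun d hd => ?_)
  rw [aeval_monomial]
  refine le_trans (totalDegree_mul _ _) ?_
  have h1 : (algebraMap R (MvPolynomial (Fin m) R) (coeff d p)).totalDegree = 0 :=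
    totalDegree_C _
  rw [h1, zero_add]
  have h2 : (d.prod fun i k => f i ^ k).totalDegree ≤ d.sum fun _ k => k := by
    refine le_trans (totalDegree_finset_prod _ _) ?_
    rw [Finsupp.sum]
    refine Finset.sum_le_sum fun j hj => ?_
    calc (f j ^ d j).totalDegree ≤ d j * (f j).totalDegree := totalDegree_pow _ _
      _ ≤ d j * 1 := Nat.mul_le_mul_left _ (hf j)
      _ = d j := Nat.mul_one _
  exact le_trans h2 (le_totalDegree hd)

open MvPolynomial in
private lemma RM_comp_affine {r m : ℕ} (A : (Fin m → ZMod 2) ≃ₗ[ZMod 2] (Fin m → ZMod 2))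
    (b : Fin m → ZMod 2) {c : (Fin m → ZMod 2) → ZMod 2} (hc : c ∈ RM r m) :
    (fun x => c (A x + b)) ∈ RM r m := by
  obtain ⟨p, hp, rfl⟩ := hc
  have hp' : p.totalDegree ≤ r := (MvPolynomial.mem_restrictTotalDegree _ r p).mp hp
  set f : Fin m → MvPolynomial (Fin m) (ZMod 2) :=
    fun j => (∑ k, C (A (Pi.single k 1) j) * X k) + C (b j) with hf
  have hdeg : ∀ j, (f j).totalDegree ≤ 1 := by
    intro j
    refine le_trans (totalDegree_add _ _) (max_le ?_ (le_trans (totalDegree_C _).le zero_le_one))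
    refine le_trans (totalDegree_finset_sum _ _) (Finset.sup_le fun k _ => ?_)
    refine le_trans (totalDegree_mul _ _) ?_
    simp [totalDegree_X]
  refine ⟨aeval f p, ?_, ?_⟩
  · exact (MvPolynomial.mem_restrictTotalDegree _ r _).mpr (le_trans (td_aeval_le' f hdeg p) hp')
  · funext x
    show eval x (aeval f p) = eval (A x + b) p
    have key : ∀ j, eval x (f j) = (A x + b) j := by
      intro j
      have hx : x = ∑ k, x k • Pi.single k (1 : ZMod 2) := by
        funext l
        simp [Finset.sum_apply, Pi.single_apply]
      have hAx : A x = ∑ k, x k • A (Pi.single k 1) := by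
        conv_lhs => rw [hx, map_sum]
        simp_rw [map_smul]
      simp only [hf, map_add, map_sum, map_mul, eval_C, eval_X, Pi.add_apply]
      rw [hAx]
      simp [Finset.sum_apply, mul_comm]
    have he : ∀ (y : Fin m → ZMod 2) q, eval y q = aeval y q := by
      intro y q; rw [← coe_aeval_eq_eval]; rfl
    rw [he, aeval_eq_bind₁ f, aeval_bind₁]
    simp_rw [← he]
    rw [funext key, he]

private lemma lift_comp {F E ι : Type*} [Field F] [Field E] [Algebra F E]
    {C : Submodule F (ι → F)} (σ : ι → ι) (hσ : ∀ c ∈ C, (fun x => c (σ x)) ∈ C)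
    {c : ι → E} (hc : c ∈ liftCode F E C) : (fun x => c (σ x)) ∈ liftCode F E C := by
  have h := Submodule.mem_map_of_mem (f := LinearMap.funLeft E E σ) hc
  rw [liftCode, Submodule.map_span] at h
  refine Submodule.span_mono ?_ h
  rintro _ ⟨_, ⟨d, hd, rfl⟩, rfl⟩
  exact ⟨fun x => d (σ x), hσ d hd, rfl⟩

private lemma wt_comp {ι R : Type*} [Fintype ι] [Zero R] (c : ι → R) (σ : ι ≃ ι) :
    wt (fun x => c (σ x)) = wt c := by
  unfold wt
  have : {j | c (σ j) ≠ 0} = σ.symm '' {j | c j ≠ 0} := by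
    ext j; simp [Equiv.eq_symm_apply, eq_comm]
  rw [this, Set.ncard_image_of_injective _ σ.symm.injective]

private lemma pair_li {F V : Type*} [Field F] [AddCommGroup V] [Module F V] {u v : V}
    (hu : u ≠ 0) (hv : v ≠ 0) (huv : u ≠ v) (h2 : ∀ a : F, a = 0 ∨ a = 1) :
    LinearIndependent F ((↑) : ({u, v} : Set V) → V) := by
  have hns : u ∉ ({v} : Set V) := by simpa using huv
  rw [show ({u, v} : Set V) = insert u {v} from rfl,
    linearIndependent_subtype_iff, linearIndepOn_id_insert hns]
  refine ⟨(linearIndepOn_singleton_iff F).mpr hv, fun hmem => ?_⟩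
  rw [Submodule.mem_span_singleton] at hmem
  obtain ⟨a, ha⟩ := hmem
  rcases h2 a with rfl | rfl
  · exact hu (by simpa using ha.symm)
  · exact huv (by simpa using ha.symm)

private lemma exists_linEquiv_pair {F V : Type*} [Field F] [AddCommGroup V] [Module F V]
    [FiniteDimensional F V] {u v u' v' : V}
    (h : LinearIndependent F ((↑) : ({u, v} : Set V) → V))
    (h' : LinearIndependent F ((↑) : ({u', v'} : Set V) → V))
    (huv : u ≠ v) (huv' : u' ≠ v') :
    ∃ g : V ≃ₗ[F] V, g u = u' ∧ g v = v' := by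
  classical
  let s := (linearIndependent_subtype_iff.mp h).extend (Set.subset_univ _)
  let t := (linearIndependent_subtype_iff.mp h').extend (Set.subset_univ _)
  let B : Module.Basis s F V := Module.Basis.extend (linearIndependent_subtype_iff.mp h)
  let B' : Module.Basis t F V := Module.Basis.extend (linearIndependent_subtype_iff.mp h')
  haveI : Fintype s := FiniteDimensional.fintypeBasisIndex B
  haveI : Fintype t := FiniteDimensional.fintypeBasisIndex B'
  have hcard : Fintype.card s = Fintype.card t := by
    rw [← Module.finrank_eq_card_basis B, ← Module.finrank_eq_card_basis B']
  have hus : u ∈ s := (linearIndependent_subtype_iff.mp h).subset_extend _ (by simp)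
  have hvs : v ∈ s := (linearIndependent_subtype_iff.mp h).subset_extend _ (by simp)
  have hut : u' ∈ t := (linearIndependent_subtype_iff.mp h').subset_extend _ (by simp)
  have hvt : v' ∈ t := (linearIndependent_subtype_iff.mp h').subset_extend _ (by simp)
  obtain ⟨e₀⟩ : Nonempty (s ≃ t) := ⟨Fintype.equivOfCardEq hcard⟩
  let e₁ : s ≃ t := e₀.trans (Equiv.swap (e₀ ⟨u, hus⟩) ⟨u', hut⟩)
  have he₁u : e₁ ⟨u, hus⟩ = ⟨u', hut⟩ := by simp [e₁]
  let e₂ : s ≃ t := e₁.trans (Equiv.swap (e₁ ⟨v, hvs⟩) ⟨v', hvt⟩)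
  have hne : e₁ ⟨v, hvs⟩ ≠ ⟨u', hut⟩ := by
    rw [← he₁u]
    exact fun hh => huv (by simpa using (e₁.injective hh).symm) |>.elim
  have he₂u : e₂ ⟨u, hus⟩ = ⟨u', hut⟩ := by
    simp only [e₂, Equiv.trans_apply, he₁u]
    rw [Equiv.swap_apply_of_ne_of_ne hne.symm (by simpa using huv')]
  have he₂v : e₂ ⟨v, hvs⟩ = ⟨v', hvt⟩ := by simp [e₂]
  refine ⟨B.equiv B' e₂, ?_, ?_⟩
  · have : B ⟨u, hus⟩ = u := Module.Basis.extend_apply_self _ _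
    rw [← this, Module.Basis.equiv_apply, he₂u, Module.Basis.extend_apply_self]
  · have : B ⟨v, hvs⟩ = v := Module.Basis.extend_apply_self _ _
    rw [← this, Module.Basis.equiv_apply, he₂v, Module.Basis.extend_apply_self]

private lemma affine_trans {F V : Type*} [Field F] [AddCommGroup V] [Module F V]
    [FiniteDimensional F V] (h2 : ∀ x : F, x = 0 ∨ x = 1) {a b c a' b' c' : V}
    (hab : a ≠ b) (hac : a ≠ c) (hbc : b ≠ c)
    (hab' : a' ≠ b') (hac' : a' ≠ c') (hbc' : b' ≠ c') :
    ∃ (A : V ≃ₗ[F] V) (t : V), A a + t = a' ∧ A b + t = b' ∧ A c + t = c' := by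
  have hu : b - a ≠ 0 := sub_ne_zero.mpr hab.symm
  have hv : c - a ≠ 0 := sub_ne_zero.mpr hac.symm
  have huv : b - a ≠ c - a := fun hh => hbc (by
    have := congrArg (· + a) hh; simpa using this)
  have hu' : b' - a' ≠ 0 := sub_ne_zero.mpr hab'.symm
  have hv' : c' - a' ≠ 0 := sub_ne_zero.mpr hac'.symm
  have huv' : b' - a' ≠ c' - a' := fun hh => hbc' (by
    have := congrArg (· + a') hh; simpa using this)
  obtain ⟨g, hg1, hg2⟩ := exists_linEquiv_pair (pair_li hu hv huv h2)
    (pair_li hu' hv' huv' h2) huv huv'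
  refine ⟨g, a' - g a, by abel, ?_, ?_⟩
  · have h3 : g b - g a = b' - a' := by rw [← map_sub, hg1]
    have hb : g b = b' - a' + g a := by rw [← h3]; abel
    rw [hb]; abel
  · have h3 : g c - g a = c' - a' := by rw [← map_sub, hg2]
    have hc : g c = c' - a' + g a := by rw [← h3]; abel
    rw [hc]; abel

private lemma count_comp {ι E : Type*} [Fintype ι] [Field E]
    (code : Submodule E (ι → E)) (i : ℕ) (σ : ι ≃ ι)
    (h1 : ∀ c ∈ code, (fun x => c (σ x)) ∈ code)
    (h2 : ∀ c ∈ code, (fun x => c (σ.symm x)) ∈ code) (T : Set ι) :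
    {s | s ∈ codeSupports code i ∧ T ⊆ s}.ncard
      = {s | s ∈ codeSupports code i ∧ σ '' T ⊆ s}.ncard := by
  have hset : {s | s ∈ codeSupports code i ∧ T ⊆ s}
      = (fun s => σ ⁻¹' s) '' {s | s ∈ codeSupports code i ∧ σ '' T ⊆ s} := by
    ext t
    constructor
    · rintro ⟨⟨c, hc, hwt, rfl⟩, hT⟩
      refine ⟨σ.symm ⁻¹' {j | c j ≠ 0}, ⟨⟨fun x => c (σ.symm x), h2 c hc, ?_, rfl⟩, ?_⟩, ?_⟩
      · rw [wt_comp c σ.symm]; exact hwt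
      · rintro _ ⟨x, hx, rfl⟩
        simpa using hT hx
      · ext j; simp
    · rintro ⟨s, ⟨⟨c, hc, hwt, rfl⟩, hT⟩, rfl⟩
      refine ⟨⟨fun x => c (σ x), h1 c hc, ?_, rfl⟩, ?_⟩
      · rw [wt_comp c σ]; exact hwt
      · intro x hx
        exact hT ⟨x, hx, rfl⟩
  rw [hset, Set.ncard_image_of_injective]
  intro s t hst
  have := congrArg (fun w => σ.symm ⁻¹' w) hst
  simpa [Set.preimage_preimage] using this

/-- for `m ≥ 3`, `ℓ ≥ 1`, `0 ≤ r < m`, and each `i ≥ 3` with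
`A_i(RM₂(r,m)(2|2^ℓ)) > 0`, the supports of the weight-`i` codewords of the lifted
Reed-Muller code form a 3-design on the `2^m` points. -/
theorem stmt19 {E : Type*} [Field E] [Algebra (ZMod 2) E] [Fintype E]
    {m r ℓ : ℕ} (hm : 3 ≤ m) (hl : 1 ≤ ℓ) (hr : r < m)
    (hE : Fintype.card E = 2 ^ ℓ)
    (i : ℕ) (hi : 3 ≤ i) (hA : 0 < numWt (liftCode (ZMod 2) E (RM r m)) i) :
    ∃ lam : ℕ, 0 < lam ∧ ∀ T : Finset (Fin m → ZMod 2), T.card = 3 →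
      Set.ncard {s ∈ codeSupports (liftCode (ZMod 2) E (RM r m)) i | ↑T ⊆ s} = lam := by
  
  classical
  have h2 : ∀ x : ZMod 2, x = 0 ∨ x = 1 := by decide
  set CD := liftCode (ZMod 2) E (RM r m) with hCD
  have inv : ∀ (A : (Fin m → ZMod 2) ≃ₗ[ZMod 2] (Fin m → ZMod 2)) (b : Fin m → ZMod 2),
      ∀ c ∈ CD, (fun x => c (A x + b)) ∈ CD :=
    fun A b c hc => lift_comp _ (fun d hd => RM_comp_affine A b hd) hc
  have count : ∀ (A : (Fin m → ZMod 2) ≃ₗ[ZMod 2] (Fin m → ZMod 2)) (b : Fin m → ZMod 2)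
      (T : Set (Fin m → ZMod 2)),
      {s | s ∈ codeSupports CD i ∧ T ⊆ s}.ncard
        = {s | s ∈ codeSupports CD i ∧ (fun x => A x + b) '' T ⊆ s}.ncard := by
    intro A b T
    let σ : (Fin m → ZMod 2) ≃ (Fin m → ZMod 2) := A.toEquiv.trans (Equiv.addRight b)
    have hσ : ∀ x, σ x = A x + b := fun x => rfl
    have hσs : ∀ x, σ.symm x = A.symm x + (- A.symm b) := by
      intro x
      rw [Equiv.symm_apply_eq]
      show x = A (A.symm x + -A.symm b) + b
      rw [map_add, map_neg, LinearEquiv.apply_symm_apply, LinearEquiv.apply_symm_apply]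
      abel
    have hs1 : ∀ c ∈ CD, (fun x => c (σ x)) ∈ CD := fun c hc => inv A b c hc
    have hs2 : ∀ c ∈ CD, (fun x => c (σ.symm x)) ∈ CD := by
      intro c hc
      have hh : (fun x => c (σ.symm x)) = (fun x => c (A.symm x + (- A.symm b))) :=
        funext fun x => by rw [hσs]
      rw [hh]
      exact inv A.symm (- A.symm b) c hc
    have himg : (fun x => A x + b) '' T = σ '' T := rfl
    rw [himg]
    exact count_comp CD i σ hs1 hs2 T
  -- extract a weight-i codeword
  have hA' : {c : (Fin m → ZMod 2) → E | c ∈ CD ∧ wt c = i}.Nonempty :=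
    Set.nonempty_of_ncard_ne_zero hA.ne'
  obtain ⟨c₀, hc₀, hwt₀⟩ := hA'
  have hS₀ : {j | c₀ j ≠ 0} ∈ codeSupports CD i := ⟨c₀, hc₀, hwt₀, rfl⟩
  have hScard : 2 < ({j | c₀ j ≠ 0} : Set (Fin m → ZMod 2)).ncard := by
    show 2 < wt c₀
    omega
  obtain ⟨a₀, b₀, d₀, ha₀, hb₀, hd₀, hab₀, had₀, hbd₀⟩ :=
    (Set.two_lt_ncard_iff (Set.toFinite _)).mp hScard
  refine ⟨{s | s ∈ codeSupports CD i ∧ ({a₀, b₀, d₀} : Set (Fin m → ZMod 2)) ⊆ s}.ncard, ?_, ?_⟩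
  · rw [Set.ncard_pos (Set.toFinite _)]
    exact ⟨{j | c₀ j ≠ 0}, hS₀, by
      intro x hx
      rcases hx with rfl | rfl | rfl <;> assumption⟩
  · intro T hT
    obtain ⟨a, b, c, hab, hac, hbc, rfl⟩ := Finset.card_eq_three.mp hT
    obtain ⟨A, t, h1, h2', h3⟩ := affine_trans h2 hab hac hbc hab₀ had₀ hbd₀
    have hcoe : (↑({a, b, c} : Finset (Fin m → ZMod 2)) : Set (Fin m → ZMod 2))
        = ({a, b, c} : Set (Fin m → ZMod 2)) := by simp
    have himg : (fun x => A x + t) '' ({a, b, c} : Set (Fin m → ZMod 2))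
        = ({a₀, b₀, d₀} : Set (Fin m → ZMod 2)) := by
      rw [Set.image_insert_eq, Set.image_insert_eq, Set.image_singleton]
      simp only [h1, h2', h3]
    have := count A t ({a, b, c} : Set (Fin m → ZMod 2))
    rw [himg] at this
    calc {s | s ∈ codeSupports CD i ∧ (↑({a, b, c} : Finset (Fin m → ZMod 2)) : Set _) ⊆ s}.ncard
        = {s | s ∈ codeSupports CD i ∧ ({a, b, c} : Set (Fin m → ZMod 2)) ⊆ s}.ncard := by
          rw [hcoe]
      _ = _ := this
end
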